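/- If N = (p_1 p_2 ⋯ p_t)^{2a} = m^2 is a quasiperfect number (where p_1, ..., p_t are distinct primes and a is a positive integer), then 2a + 1 is divisible by 3. -/

import Mathlib

/-- A positive integer `N` is quasiperfect if `σ(N) = 2N + 1`. -/
def Quasiperfect (N : ℕ) : Prop :=
  0 < N ∧ ArithmeticFunction.sigma 1 N = 2 * N + 1

/-- Products of naturals that are 1 or 3 mod 8 are 1 or 3 mod 8. -/
lemma aux_mod8_factors : ∀ b : ℕ, b ≠ 0 →
    (∀ q : ℕ, q.Prime → q ∣ b → q % 8 = 1 ∨ q % 8 = 3) → b % 8 = 1 ∨ b % 8 = 3 := by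
  intro b
  induction b using Nat.strong_induction_on with
  | _ b ih =>
    intro hb h
    rcases eq_or_ne b 1 with rfl | hb1
    · left; rfl
    · obtain ⟨q, hq, hdvd⟩ := Nat.exists_prime_and_dvd hb1
      obtain ⟨c, rfl⟩ := hdvd
      have hc : c ≠ 0 := by rintro rfl; simp at hb
      have hlt : c < q * c :=
        (Nat.lt_mul_iff_one_lt_left (Nat.pos_of_ne_zero hc)).mpr hq.one_lt
      have ihc := ih c hlt hc (fun r hr hrd => h r hr (hrd.mul_left q))
      have hq8 := h q hq (Dvd.intro c rfl)
      have hmm : (q * c) % 8 = (q % 8) * (c % 8) % 8 := Nat.mul_mod q c 8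
      rcases hq8 with h1 | h1 <;> rcases ihc with h2 | h2 <;>
        rw [hmm, h1, h2] <;> norm_num

lemma aux_sum3_mod8 (a : ℕ) :
    ((∑ k ∈ Finset.range (2 * a + 1), 3 ^ k : ℕ) : ZMod 8) = 4 * (a : ZMod 8) + 1 := by
  induction a with
  | zero => norm_num
  | succ n ihn =>
    have h : 2 * (n + 1) + 1 = (2 * n + 1) + 1 + 1 := by ring
    rw [h, Finset.sum_range_succ, Finset.sum_range_succ, Nat.cast_add, Nat.cast_add, ihn]
    have h1 : ((3 ^ (2 * n + 1) : ℕ) : ZMod 8) = 3 := by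
      push_cast
      rw [pow_succ, pow_mul, show ((3 : ZMod 8) ^ 2) = 1 by decide, one_pow, one_mul]
    have h2 : ((3 ^ (2 * n + 1 + 1) : ℕ) : ZMod 8) = 1 := by
      push_cast
      rw [show 2 * n + 1 + 1 = 2 * (n + 1) by ring, pow_mul,
        show ((3 : ZMod 8) ^ 2) = 1 by decide, one_pow]
    rw [h1, h2]
    push_cast
    ring

lemma aux_sum2_mod8 (a : ℕ) (ha : 0 < a) :
    ((∑ k ∈ Finset.range (2 * a + 1), 2 ^ k : ℕ) : ZMod 8) = 7 := by
  obtain ⟨b, rfl⟩ : ∃ b, a = b + 1 := ⟨a - 1, by omega⟩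
  clear ha
  induction b with
  | zero => norm_num [Finset.sum_range_succ]
  | succ n ihn =>
    have h : 2 * (n + 1 + 1) + 1 = (2 * (n + 1) + 1) + 1 + 1 := by ring
    rw [h, Finset.sum_range_succ, Finset.sum_range_succ, Nat.cast_add, Nat.cast_add, ihn]
    have h1 : ((2 ^ (2 * (n + 1) + 1) : ℕ) : ZMod 8) = 0 := by
      push_cast
      rw [show 2 * (n + 1) + 1 = 3 + 2 * n by ring, pow_add,
        show ((2 : ZMod 8) ^ 3) = 0 by decide, zero_mul]
    have h2 : ((2 ^ (2 * (n + 1) + 1 + 1) : ℕ) : ZMod 8) = 0 := by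
      push_cast
      rw [show 2 * (n + 1) + 1 + 1 = 3 + (2 * n + 1) by ring, pow_add,
        show ((2 : ZMod 8) ^ 3) = 0 by decide, zero_mul]
    rw [h1, h2]
    norm_num

lemma aux_sum_mod4 (x a : ℕ) (hx : x % 2 = 1) (haeven : a % 2 = 0) :
    ((∑ k ∈ Finset.range (2 * a + 1), x ^ k : ℕ) : ZMod 4) = 1 := by
  obtain ⟨c, rfl⟩ : ∃ c, a = 2 * c := ⟨a / 2, by omega⟩
  have hx4 : (x : ZMod 4) = 1 ∨ (x : ZMod 4) = 3 := by
    have h : x % 4 = 1 ∨ x % 4 = 3 := by omega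
    rcases h with h | h
    · left; rw [← ZMod.natCast_mod x 4, h]; rfl
    · right; rw [← ZMod.natCast_mod x 4, h]; rfl
  push_cast
  rcases hx4 with h | h
  · rw [h]
    simp only [one_pow, Finset.sum_const, Finset.card_range, nsmul_eq_mul, mul_one]
    push_cast
    have : ((4 : ℕ) : ZMod 4) = 0 := by decide
    push_cast at this
    linear_combination (c : ZMod 4) * this
  · rw [h, show (3 : ZMod 4) = -1 by decide, neg_one_geom_sum]
    rw [if_neg (by simp [Nat.even_add_one, parity_simps])]

lemma aux_sum_mod3_two (x a : ℕ) (hx : (x : ZMod 3) = 2) :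
    ((∑ k ∈ Finset.range (2 * a + 1), x ^ k : ℕ) : ZMod 3) = 1 := by
  push_cast
  rw [hx, show (2 : ZMod 3) = -1 by decide, neg_one_geom_sum]
  rw [if_neg (by simp [Nat.even_add_one, parity_simps])]

lemma aux_sum_mod3_one (x a : ℕ) (hx : (x : ZMod 3) = 1) :
    ((∑ k ∈ Finset.range (2 * a + 1), x ^ k : ℕ) : ZMod 3) = ((2 * a + 1 : ℕ) : ZMod 3) := by
  push_cast
  rw [hx]
  simp only [one_pow, Finset.sum_const, Finset.card_range, nsmul_eq_mul, mul_one]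
  push_cast
  ring

/-- If `N = (p₁ p₂ ⋯ p_t)^{2a} = m²` is quasiperfect, then `3 ∣ 2a + 1`. -/
theorem stmt_3 (t : ℕ) (p : Fin t → ℕ) (a N m : ℕ)
    (hp : ∀ i, (p i).Prime) (hinj : Function.Injective p)
    (ha : 0 < a)
    (hN : N = (∏ i, p i) ^ (2 * a)) (hm : N = m ^ 2)
    (hq : Quasiperfect N) :
    3 ∣ 2 * a + 1 := by
  obtain ⟨hNpos, hsig⟩ := hq
  set F : Fin t → ℕ := fun i => ∑ k ∈ Finset.range (2 * a + 1), p i ^ k with hF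
  -- σ(N) = ∏ F i
  have hNprod : N = ∏ i, p i ^ (2 * a) := by rw [hN, ← Finset.prod_pow]
  have hσprod : 2 * N + 1 = ∏ i, F i := by
    have hcop : ((Finset.univ : Finset (Fin t)) : Set (Fin t)).Pairwise
        (Function.onFun Nat.Coprime fun i => p i ^ (2 * a)) := by
      intro i _ j _ hij
      exact Nat.Coprime.pow _ _ ((Nat.coprime_primes (hp i) (hp j)).mpr (fun h => hij (hinj h)))
    rw [← hsig, hNprod, ArithmeticFunction.IsMultiplicative.map_prod _
      ArithmeticFunction.isMultiplicative_sigma Finset.univ hcop]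
    refine Finset.prod_congr rfl fun i _ => ?_
    rw [ArithmeticFunction.sigma_one_apply, Nat.sum_divisors_prime_pow (hp i)]
  have hFdvd : ∀ i, F i ∣ 2 * N + 1 := by
    intro i
    rw [hσprod]
    exact Finset.dvd_prod_of_mem _ (Finset.mem_univ i)
  -- every prime factor of 2N+1 is 1 or 3 mod 8
  have hq8 : ∀ q : ℕ, q.Prime → q ∣ 2 * N + 1 → q % 8 = 1 ∨ q % 8 = 3 := by
    intro q hqp hqd
    haveI : Fact q.Prime := ⟨hqp⟩
    have hq2 : q ≠ 2 := by
      rintro rfl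
      omega
    have h0 : ((2 * N + 1 : ℕ) : ZMod q) = 0 :=
      (ZMod.natCast_eq_zero_iff _ _).mpr hqd
    push_cast at h0
    have h2 : (N : ZMod q) = (m : ZMod q) ^ 2 := by rw [hm]; push_cast; ring
    have hsq : IsSquare (-2 : ZMod q) := by
      refine ⟨2 * (m : ZMod q), ?_⟩
      linear_combination (-2 : ZMod q) * h0 + 4 * h2
    exact (ZMod.exists_sq_eq_neg_two_iff hq2).mp hsq
  have hFq8 : ∀ i, F i % 8 = 1 ∨ F i % 8 = 3 := by
    intro i
    refine aux_mod8_factors (F i) ?_ ?_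
    · intro h
      have := hFdvd i
      rw [h] at this
      omega
    · intro q hqp hqd
      exact hq8 q hqp (hqd.trans (hFdvd i))
  -- N is odd
  have hNodd : ¬ 2 ∣ N := by
    intro h2N
    have h2prod : 2 ∣ ∏ i, p i := Nat.Prime.dvd_of_dvd_pow Nat.prime_two (hN ▸ h2N)
    obtain ⟨i, _, hi⟩ := (Nat.prime_two.prime).exists_mem_finset_dvd h2prod
    have hpi2 : p i = 2 := ((Nat.prime_dvd_prime_iff_eq Nat.prime_two (hp i)).mp hi).symm
    have hFval : ((F i : ℕ) : ZMod 8) = 7 := by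
      rw [hF]; simp only; rw [hpi2]; exact aux_sum2_mod8 a ha
    have hFmod : F i % 8 = 7 := by
      have := congrArg ZMod.val hFval
      rwa [ZMod.val_natCast, show (7 : ZMod 8).val = 7 from rfl] at this
    have := hFq8 i
    omega
  have hpdvdN : ∀ i, p i ∣ N := by
    intro i
    rw [hN]
    exact (Finset.dvd_prod_of_mem p (Finset.mem_univ i)).trans
      (dvd_pow_self _ (by omega))
  -- each p i is odd
  have hpodd : ∀ i, p i % 2 = 1 := by
    intro i
    rcases (hp i).eq_two_or_odd with h | h
    · exact absurd (h ▸ hpdvdN i) hNodd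
    · exact h
  have hNmod2 : N % 2 = 1 := by
    rcases Nat.mod_two_eq_zero_or_one N with h | h
    · exact absurd (Nat.dvd_of_mod_eq_zero h) hNodd
    · exact h
  -- a is odd
  have haodd : a % 2 = 1 := by
    by_contra haeven
    have haeven' : a % 2 = 0 := by omega
    have hprod4 : ((∏ i, F i : ℕ) : ZMod 4) = 1 := by
      push_cast
      refine Finset.prod_eq_one fun i _ => ?_
      have := aux_sum_mod4 (p i) a (hpodd i) haeven'
      push_cast at this ⊢
      simpa [hF] using this
    rw [← hσprod] at hprod4
    obtain ⟨j, hj⟩ : ∃ j, N = 2 * j + 1 := ⟨N / 2, by omega⟩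
    rw [hj] at hprod4
    push_cast at hprod4
    have h4 : ((4 : ℕ) : ZMod 4) = 0 := by decide
    push_cast at h4
    have : (3 : ZMod 4) = 1 := by linear_combination hprod4 - (j : ZMod 4) * h4
    exact absurd this (by decide)
  -- 3 does not divide N
  have h3N : ¬ 3 ∣ N := by
    intro h3N
    have h3prod : 3 ∣ ∏ i, p i := Nat.Prime.dvd_of_dvd_pow Nat.prime_three (hN ▸ h3N)
    obtain ⟨i, _, hi⟩ := (Nat.prime_three.prime).exists_mem_finset_dvd h3prod
    have hpi3 : p i = 3 := ((Nat.prime_dvd_prime_iff_eq Nat.prime_three (hp i)).mp hi).symm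
    obtain ⟨b, hb⟩ : ∃ b, a = 2 * b + 1 := ⟨a / 2, by omega⟩
    have hFval : ((F i : ℕ) : ZMod 8) = 5 := by
      rw [hF]; simp only; rw [hpi3, aux_sum3_mod8 a, hb]
      push_cast
      have h8 : ((8 : ℕ) : ZMod 8) = 0 := by decide
      push_cast at h8
      linear_combination (b : ZMod 8) * h8
    have hFmod : F i % 8 = 5 := by
      have := congrArg ZMod.val hFval
      rwa [ZMod.val_natCast, show (5 : ZMod 8).val = 5 from rfl] at this
    have := hFq8 i
    omega
  -- hence N ≡ 1 mod 3 and 3 ∣ 2N+1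
  have hm3 : ¬ 3 ∣ m := fun h => h3N (hm ▸ (h.mul_right m).trans (by rw [sq]))
  have hN3 : N % 3 = 1 := by
    rw [hm, Nat.pow_mod]
    have : m % 3 = 1 ∨ m % 3 = 2 := by
      have h0 : ¬ m % 3 = 0 := fun h => hm3 (Nat.dvd_of_mod_eq_zero h)
      omega
    rcases this with h | h <;> rw [h]
  have h3dvd : 3 ∣ 2 * N + 1 := by omega
  rw [hσprod] at h3dvd
  obtain ⟨i, _, hi⟩ := (Nat.prime_three.prime).exists_mem_finset_dvd h3dvd
  have hpi3 : p i ≠ 3 := fun h => h3N (h ▸ hpdvdN i)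
  have hp3cast : (p i : ZMod 3) = 1 ∨ (p i : ZMod 3) = 2 := by
    have h3nd : ¬ 3 ∣ p i := fun h =>
      hpi3 ((Nat.prime_dvd_prime_iff_eq Nat.prime_three (hp i)).mp h).symm
    have : p i % 3 = 1 ∨ p i % 3 = 2 := by
      have h0 : ¬ p i % 3 = 0 := fun h => h3nd (Nat.dvd_of_mod_eq_zero h)
      omega
    rcases this with h | h
    · left; rw [← ZMod.natCast_mod (p i) 3, h]; rfl
    · right; rw [← ZMod.natCast_mod (p i) 3, h]; rfl
  have hFi0 : ((F i : ℕ) : ZMod 3) = 0 := (ZMod.natCast_eq_zero_iff _ _).mpr hi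
  rcases hp3cast with hc | hc
  · have := aux_sum_mod3_one (p i) a hc
    rw [hF] at hFi0
    simp only at hFi0
    rw [hFi0] at this
    exact (ZMod.natCast_eq_zero_iff _ _).mp this.symm
  · have := aux_sum_mod3_two (p i) a hc
    rw [hF] at hFi0
    simp only at hFi0
    rw [hFi0] at this
    exact absurd this (by decide)
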